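/- Let A be a product of fields with primitive idempotents e_1,...,e_r, σ ∈ Aut_F(A), and R = A[z;σ] the skew polynomial ring with a*z = z*σ(a). Then for f,g ∈ R and any k: f·e_k·g = 0 implies f·e_k = 0 or e_k·g = 0. -/

import Mathlib

open Polynomial

noncomputable def skewMul {F A : Type*} [CommRing F] [CommRing A] [Algebra F A]
    (σ : A ≃ₐ[F] A) (g h : Polynomial A) : Polynomial A :=
  ∑ ν ∈ g.support, ∑ μ ∈ h.support,
    Polynomial.monomial (ν + μ) ((σ ^ μ) (g.coeff ν) * h.coeff μ)

lemma skewMul_coeff {F A : Type*} [CommRing F] [CommRing A] [Algebra F A]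
    (σ : A ≃ₐ[F] A) (p q : Polynomial A) (n : ℕ) :
    (skewMul σ p q).coeff n =
      ∑ x ∈ Finset.HasAntidiagonal.antidiagonal n, (σ ^ x.2) (p.coeff x.1) * q.coeff x.2 := by
  unfold skewMul
  rw [Polynomial.finset_sum_coeff]
  simp_rw [Polynomial.finset_sum_coeff, Polynomial.coeff_monomial]
  rw [← Finset.sum_product', ← Finset.sum_filter]
  apply Finset.sum_subset
  · intro x hx
    simp only [Finset.mem_filter, Finset.mem_product] at hx
    simpa [Finset.HasAntidiagonal.mem_antidiagonal] using hx.2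
  · intro x hx hx'
    simp only [Finset.HasAntidiagonal.mem_antidiagonal] at hx
    simp only [Finset.mem_filter, Finset.mem_product, hx, and_true, not_and_or] at hx'
    rcases hx' with h1 | h2
    · rw [Polynomial.notMem_support_iff.mp h1, map_zero, zero_mul]
    · rw [Polynomial.notMem_support_iff.mp h2, mul_zero]

lemma single_eq_zero_iff {r : ℕ} {K : Fin r → Type} [∀ k, Field (K k)]
    {j : Fin r} {c : K j} : Pi.single j c = 0 ↔ c = 0 := by
  constructor
  · intro h
    have := congrFun h j
    simpa [Pi.single_eq_same] using this
  · rintro rfl; exact Pi.single_zero j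

lemma mul_single_one {r : ℕ} {K : Fin r → Type} [∀ k, Field (K k)]
    (x : ∀ k, K k) (j : Fin r) : x * Pi.single j 1 = Pi.single j (x j) := by
  rw [← Pi.single_mul_right, mul_one]

lemma single_one_mul {r : ℕ} {K : Fin r → Type} [∀ k, Field (K k)]
    (x : ∀ k, K k) (j : Fin r) : Pi.single j 1 * x = Pi.single j (x j) := by
  rw [← Pi.single_mul_left, one_mul]

lemma aut_single {F : Type} [Field F] {r : ℕ} {K : Fin r → Type}
    [∀ k, Field (K k)] [∀ k, Algebra F (K k)]
    (τ : (∀ k, K k) ≃ₐ[F] (∀ k, K k)) (k : Fin r) :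
    ∃ j, τ (Pi.single k 1) = Pi.single j 1 := by
  set e : ∀ k, K k := Pi.single k 1 with he
  have hee : e * e = e := by rw [he, mul_single_one, Pi.single_eq_same]
  set u := τ e with hu
  have hu2 : u * u = u := by rw [hu, ← map_mul, hee]
  have hu01 : ∀ j, u j = 0 ∨ u j = 1 := by
    intro j
    have h2 : u j * u j = u j := congrFun hu2 j
    rcases eq_or_ne (u j) 0 with h0 | h0
    · exact Or.inl h0
    · right
      exact mul_left_cancel₀ h0 (h2.trans (mul_one (u j)).symm)
  have hune : u ≠ 0 := by
    intro h0
    have : e = 0 := τ.injective (by rw [← hu, h0, map_zero])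
    exact one_ne_zero (single_eq_zero_iff.mp this)
  obtain ⟨j, hj⟩ : ∃ j, u j ≠ 0 := by
    by_contra hc
    push_neg at hc
    exact hune (funext hc)
  have huj : u j = 1 := (hu01 j).resolve_left hj
  refine ⟨j, funext fun j' => ?_⟩
  rcases eq_or_ne j' j with rfl | hj'
  · rw [huj, Pi.single_eq_same]
  · rw [Pi.single_eq_of_ne hj']
    rcases hu01 j' with h0 | h1
    · exact h0
    -- contradiction case
    exfalso
    set v := τ.symm (Pi.single j 1) with hv
    set w := τ.symm (Pi.single j' 1) with hw
    have hve : v * e ≠ 0 := by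
      intro h0
      have := congrArg τ h0
      rw [map_mul, hv, AlgEquiv.apply_symm_apply, map_zero, ← hu, single_one_mul, huj] at this
      exact one_ne_zero (single_eq_zero_iff.mp this)
    have hwe : w * e ≠ 0 := by
      intro h0
      have := congrArg τ h0
      rw [map_mul, hw, AlgEquiv.apply_symm_apply, map_zero, ← hu, single_one_mul, h1] at this
      exact one_ne_zero (single_eq_zero_iff.mp this)
    have hvw : v * w = 0 := by
      rw [hv, hw, ← map_mul]
      have : (Pi.single j 1 : ∀ k, K k) * Pi.single j' 1 = 0 := by
        rw [single_one_mul, Pi.single_eq_of_ne (Ne.symm hj'), Pi.single_zero]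
      rw [this, map_zero]
    have hprod : (v * e) * (w * e) = 0 := by
      have : (v * e) * (w * e) = (v * w) * (e * e) := by ring
      rw [this, hvw, zero_mul]
    rw [mul_single_one v k, mul_single_one w k, ← Pi.single_mul] at hprod
    rcases mul_eq_zero.mp (single_eq_zero_iff.mp hprod) with h | h
    · exact hve (by rw [mul_single_one, h, Pi.single_zero])
    · exact hwe (by rw [mul_single_one, h, Pi.single_zero])

theorem stmt_7 (F : Type) [Field F] (r : ℕ) (K : Fin r → Type)
    [∀ k, Field (K k)] [∀ k, Algebra F (K k)]
    (σ : (∀ k, K k) ≃ₐ[F] (∀ k, K k))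
    (f g : Polynomial (∀ k, K k)) (k : Fin r)
    (h : skewMul σ (skewMul σ f (Polynomial.C (Pi.single k 1))) g = 0) :
    skewMul σ f (Polynomial.C (Pi.single k 1)) = 0 ∨
      skewMul σ (Polynomial.C (Pi.single k 1)) g = 0 := by
  by_contra hc
  push_neg at hc
  obtain ⟨hfe0, heg0⟩ := hc
  set e : ∀ k, K k := Pi.single k 1 with he
  have hee : e * e = e := by rw [he, mul_single_one, Pi.single_eq_same]
  set fe := skewMul σ f (Polynomial.C e) with hfe
  set eg := skewMul σ (Polynomial.C e) g with heg
  have hfec : ∀ n, fe.coeff n = f.coeff n * e := by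
    intro n
    rw [hfe, skewMul_coeff, Finset.sum_eq_single (n, 0)]
    · simp
    · intro x hx hxne
      rcases eq_or_ne x.2 0 with h2 | h2
      · exfalso
        apply hxne
        have hs := Finset.HasAntidiagonal.mem_antidiagonal.mp hx
        rw [h2, add_zero] at hs
        exact Prod.ext hs h2
      · rw [Polynomial.coeff_C, if_neg h2, mul_zero]
    · intro hn
      exact absurd (Finset.HasAntidiagonal.mem_antidiagonal.mpr (add_zero n)) hn
  have hegc : ∀ n, eg.coeff n = (σ ^ n) e * g.coeff n := by
    intro n
    rw [heg, skewMul_coeff, Finset.sum_eq_single (0, n)]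
    · simp
    · intro x hx hxne
      rcases eq_or_ne x.1 0 with h1 | h1
      · exfalso
        apply hxne
        have hs := Finset.HasAntidiagonal.mem_antidiagonal.mp hx
        rw [h1, zero_add] at hs
        exact Prod.ext h1 hs
      · rw [Polynomial.coeff_C, if_neg h1, map_zero, zero_mul]
    · intro hn
      exact absurd (Finset.HasAntidiagonal.mem_antidiagonal.mpr (zero_add n)) hn
  set ν0 := fe.natDegree with hν0
  set μ0 := eg.natDegree with hμ0
  have ha : fe.coeff ν0 ≠ 0 := by
    have := Polynomial.leadingCoeff_ne_zero.mpr hfe0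
    rwa [Polynomial.leadingCoeff] at this
  have hb : eg.coeff μ0 ≠ 0 := by
    have := Polynomial.leadingCoeff_ne_zero.mpr heg0
    rwa [Polynomial.leadingCoeff] at this
  have hkey : (skewMul σ fe g).coeff (ν0 + μ0) = 0 := by
    rw [h, Polynomial.coeff_zero]
  rw [skewMul_coeff] at hkey
  have hterm : ∀ x : ℕ × ℕ,
      (σ ^ x.2) (fe.coeff x.1) * g.coeff x.2 = (σ ^ x.2) (fe.coeff x.1) * eg.coeff x.2 := by
    intro x
    have h1 : fe.coeff x.1 = fe.coeff x.1 * e := by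
      rw [hfec, mul_assoc, hee]
    conv_lhs => rw [h1]
    rw [map_mul, mul_assoc, hegc]
  rw [Finset.sum_congr rfl (fun x _ => hterm x)] at hkey
  rw [Finset.sum_eq_single (ν0, μ0)] at hkey
  · -- hkey : (σ ^ μ0) (fe.coeff ν0) * eg.coeff μ0 = 0
    obtain ⟨j, hj⟩ := aut_single (σ ^ μ0) k
    set a := (σ ^ μ0) (fe.coeff ν0) with haa
    set b := eg.coeff μ0 with hbb
    have ha0 : a ≠ 0 := fun h0 =>
      ha ((σ ^ μ0).injective (h0.trans (map_zero _).symm))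
    have hA : a = Pi.single j (a j) := by
      conv_lhs => rw [haa, show fe.coeff ν0 = fe.coeff ν0 * e from by rw [hfec, mul_assoc, hee],
        map_mul, he, hj, mul_single_one]
    have hB : b = Pi.single j (b j) := by
      conv_lhs => rw [hbb, hegc, he, hj, single_one_mul]
      rw [hbb]
      rw [hegc, he, hj, single_one_mul, Pi.single_eq_same]
    have haj : a j ≠ 0 := fun h0 => ha0 (by rw [hA, h0, Pi.single_zero])
    have hbj : b j ≠ 0 := fun h0 => hb (by rw [hB, h0, Pi.single_zero])
    have : a * b = Pi.single j (a j * b j) := by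
      conv_lhs => rw [hA, hB]
      rw [← Pi.single_mul]
    rw [this] at hkey
    exact mul_ne_zero haj hbj (single_eq_zero_iff.mp hkey)
  · intro x hx hne
    rcases lt_or_ge ν0 x.1 with hlt | hle
    · rw [Polynomial.coeff_eq_zero_of_natDegree_lt hlt, map_zero, zero_mul]
    · have hsum := Finset.HasAntidiagonal.mem_antidiagonal.mp hx
      have hx2 : μ0 < x.2 := by
        by_contra hle2
        push_neg at hle2
        have h1 : x.1 = ν0 := by omega
        have h2 : x.2 = μ0 := by omega
        exact hne (Prod.ext h1 h2)
      rw [Polynomial.coeff_eq_zero_of_natDegree_lt hx2, mul_zero]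
  · intro hn
    exact absurd (Finset.HasAntidiagonal.mem_antidiagonal.mpr (by simp)) hn
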